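/- Fix L > 0 and let w̃ be the piecewise approximation with switch points v₁ = (√2 − 1)L and v₂ = (√2 + 1)L. Then the maximum absolute approximation error sup over r ≥ 0 of (√(r² + L²) − w̃(r)) equals (√(4 + 2√2) − √2 − 1)·L, and it is attained at r = v₂ = (√2 + 1)L. In particular, for L = 8.5 the maximum absolute error is less than 1.7. -/
import Mathlib


open Real Set

/-- The piecewise approximation `w̃` of the 3D distance, with switch points
`v₁ = (√2 − 1)L` and `v₂ = (√2 + 1)L`: `w̃(r) = L` for `0 ≤ r ≤ v₁`,
`w̃(r) = (r + L)/√2` for `v₁ ≤ r ≤ v₂`, and `w̃(r) = r` for `r > v₂`. -/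
noncomputable def wtilde (L r : ℝ) : ℝ :=
  if r ≤ (Real.sqrt 2 - 1) * L then L
  else if r ≤ (Real.sqrt 2 + 1) * L then (r + L) / Real.sqrt 2
  else r

lemma aux_sqrt_le {a b : ℝ} (hb : 0 ≤ b) (h : a ≤ b ^ 2) : Real.sqrt a ≤ b := by
  calc Real.sqrt a ≤ Real.sqrt (b ^ 2) := Real.sqrt_le_sqrt h
  _ = b := Real.sqrt_sq hb

lemma wtilde_bound (L s Q r : ℝ) (hL : 0 < L) (hs2 : s ^ 2 = 2) (hs1 : 1 < s)
    (hQ0 : 0 ≤ Q) (hQ2 : Q ^ 2 = 4 + 2 * s) (hr : 0 ≤ r) :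
    Real.sqrt (r ^ 2 + L ^ 2) -
      (if r ≤ (s - 1) * L then L else if r ≤ (s + 1) * L then (r + L) / s else r)
      ≤ (Q - s - 1) * L := by
  have hs0 : (0:ℝ) < s := by linarith
  have hM0 : 0 ≤ Q - s - 1 := by nlinarith [sq_nonneg (Q - s - 1)]
  have hQlt : s * Q ≤ 1 + 2 * s := by nlinarith [sq_nonneg (s * Q - 1 - 2 * s), mul_nonneg hs0.le hQ0]
  split_ifs with h1 h2
  · -- 0 ≤ r ≤ (s-1)L
    have hB : 0 ≤ (Q - s) * L := by nlinarith
    have : Real.sqrt (r ^ 2 + L ^ 2) ≤ (Q - s) * L := by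
      apply aux_sqrt_le hB
      nlinarith [mul_le_mul h1 h1 hr (le_trans hr h1),
        mul_le_mul_of_nonneg_left hQlt (sq_nonneg L)]
    linarith
  · -- middle case
    push_neg at h1
    have hc0 : 0 ≤ s * (Q - s - 1) * L + r + L := by
      have := mul_nonneg (mul_nonneg hs0.le hM0) hL.le
      linarith
    have hrw : (Q - s - 1) * L + (r + L) / s = (s * (Q - s - 1) * L + r + L) / s := by
      field_simp; ring
    have hA : 0 ≤ (r - (s - 1) * L) * ((s + 1) * L - r) :=
      mul_nonneg (by linarith) (by linarith)
    have hB2 : 0 ≤ ((s + 1) * L - r) * (1 + 2 * s - s * Q) * L :=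
      mul_nonneg (mul_nonneg (by linarith) (by linarith)) hL.le
    have hid : (s * (Q - s - 1) * L + r + L) ^ 2 - 2 * (r ^ 2 + L ^ 2) =
        (r - (s - 1) * L) * ((s + 1) * L - r) +
          2 * (((s + 1) * L - r) * (1 + 2 * s - s * Q) * L) := by
      linear_combination (L ^ 2 * s ^ 2) * hQ2 +
        (2 * L ^ 2 + 4 * L ^ 2 * s - 2 * L ^ 2 * s * Q + L ^ 2 * s ^ 2 - 2 * r * L) * hs2
    have key : Real.sqrt (r ^ 2 + L ^ 2) ≤ (s * (Q - s - 1) * L + r + L) / s := by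
      apply aux_sqrt_le (div_nonneg hc0 hs0.le)
      rw [div_pow, hs2, le_div_iff₀ (by norm_num : (0:ℝ) < 2)]
      linarith
    rw [← hrw] at key
    linarith
  · -- r > (s+1)L
    push_neg at h2
    have hprod : 0 ≤ (Q - s - 1) * L * (r - (s + 1) * L) := by
      apply mul_nonneg (mul_nonneg hM0 hL.le); linarith
    have key2 : 2 * (Q - s - 1) * (s + 1) * L ^ 2 + (Q - s - 1) ^ 2 * L ^ 2 = L ^ 2 := by
      linear_combination L ^ 2 * hQ2 - L ^ 2 * hs2
    have hB : 0 ≤ (Q - s - 1) * L + r := by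
      have := mul_nonneg hM0 hL.le; linarith
    have : Real.sqrt (r ^ 2 + L ^ 2) ≤ (Q - s - 1) * L + r := by
      apply aux_sqrt_le hB
      nlinarith [hprod, key2]
    linarith

/-- The maximum absolute approximation error `sup_{r ≥ 0} (√(r² + L²) − w̃(r))` equals
`(√(4 + 2√2) − √2 − 1)·L`, attained at `r = v₂ = (√2 + 1)L`. In particular, for `L = 8.5`
the maximum absolute error is less than `1.7`. -/
theorem wtilde_max_error (L : ℝ) (hL : 0 < L) :
    IsGreatest ((fun r : ℝ => Real.sqrt (r ^ 2 + L ^ 2) - wtilde L r) '' Ici 0)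
      ((Real.sqrt (4 + 2 * Real.sqrt 2) - Real.sqrt 2 - 1) * L) ∧
    Real.sqrt (((Real.sqrt 2 + 1) * L) ^ 2 + L ^ 2) - wtilde L ((Real.sqrt 2 + 1) * L) =
      (Real.sqrt (4 + 2 * Real.sqrt 2) - Real.sqrt 2 - 1) * L ∧
    (L = 8.5 → (Real.sqrt (4 + 2 * Real.sqrt 2) - Real.sqrt 2 - 1) * L < 1.7) := by
  have hs0 : (0:ℝ) ≤ Real.sqrt 2 := Real.sqrt_nonneg 2
  have hs2 : Real.sqrt 2 ^ 2 = 2 := Real.sq_sqrt (by norm_num)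
  have hs1 : 1 < Real.sqrt 2 := by nlinarith
  have hQ0 : (0:ℝ) ≤ Real.sqrt (4 + 2 * Real.sqrt 2) := Real.sqrt_nonneg _
  have hQ2 : Real.sqrt (4 + 2 * Real.sqrt 2) ^ 2 = 4 + 2 * Real.sqrt 2 :=
    Real.sq_sqrt (by linarith)
  have hne : ¬ ((Real.sqrt 2 + 1) * L ≤ (Real.sqrt 2 - 1) * L) := by
    push_neg; nlinarith
  have hw2 : wtilde L ((Real.sqrt 2 + 1) * L) = (Real.sqrt 2 + 1) * L := by
    unfold wtilde
    rw [if_neg hne, if_pos le_rfl, div_eq_iff (by positivity : Real.sqrt 2 ≠ 0)]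
    linear_combination (-L) * hs2
  have hsq2 : Real.sqrt (((Real.sqrt 2 + 1) * L) ^ 2 + L ^ 2) = Real.sqrt (4 + 2 * Real.sqrt 2) * L := by
    rw [show ((Real.sqrt 2 + 1) * L) ^ 2 + L ^ 2 = (Real.sqrt (4 + 2 * Real.sqrt 2) * L) ^ 2 by
      linear_combination L ^ 2 * hs2 - L ^ 2 * hQ2]
    exact Real.sqrt_sq (by positivity)
  have hval : Real.sqrt (((Real.sqrt 2 + 1) * L) ^ 2 + L ^ 2) - wtilde L ((Real.sqrt 2 + 1) * L) =
      (Real.sqrt (4 + 2 * Real.sqrt 2) - Real.sqrt 2 - 1) * L := by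
    rw [hsq2, hw2]; ring
  refine ⟨⟨⟨(Real.sqrt 2 + 1) * L, mem_Ici.mpr (by positivity), hval⟩, ?_⟩, hval, ?_⟩
  · rintro x ⟨r, hr, rfl⟩
    simp only [mem_Ici] at hr
    exact wtilde_bound L (Real.sqrt 2) (Real.sqrt (4 + 2 * Real.sqrt 2)) r hL hs2 hs1 hQ0 hQ2 hr
  · intro hL85
    subst hL85
    have h14 : (1.4:ℝ) < Real.sqrt 2 := by nlinarith
    have : Real.sqrt (4 + 2 * Real.sqrt 2) < Real.sqrt 2 + 1.2 := by
      nlinarith [sq_nonneg (Real.sqrt 2 + 1.2 - Real.sqrt (4 + 2 * Real.sqrt 2))]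
    nlinarith
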